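/- arXiv:1109.4991 — 2 statements merged into one kernel-verified Lean document; each statement's English description precedes it below -/
import Mathlib

section
/- Let k be a field and O = k[[t^3,t^4]]. For all a, b ∈ k, the ideal I = (t^3 + a t^4 + b t^8, t^6 − a² t^8) of O has gap sequence G(I) = {0,4,8}, i.e. Γ(I) = {3+γ : γ ∈ Γ} = ⟨3⟩_Γ. -/
open PowerSeries

lemma gam_mem (m : ℕ) (h1 : m ≠ 1) (h2 : m ≠ 2) (h5 : m ≠ 5) :
    ∃ a b : ℕ, m = 3 * a + 4 * b := ⟨(m - 4 * (m % 3)) / 3, m % 3, by omega⟩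

lemma coeff_vanish {k : Type*} [Field k] {f : PowerSeries k}
    (hf : f ∈ Algebra.adjoin k {(X : PowerSeries k) ^ 3, (X : PowerSeries k) ^ 4}) :
    coeff 1 f = 0 ∧ coeff 2 f = 0 ∧ coeff 5 f = 0 := by
  induction hf using Algebra.adjoin_induction with
  | mem x hx => rcases hx with rfl | rfl <;> simp [coeff_X_pow]
  | algebraMap r => simp [PowerSeries.algebraMap_apply, coeff_C]
  | add x y hx hy ihx ihy => simp [ihx.1, ihx.2.1, ihx.2.2, ihy.1, ihy.2.1, ihy.2.2]
  | mul x y hx hy ihx ihy =>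
    refine ⟨?_, ?_, ?_⟩ <;>
    · rw [coeff_mul, Finset.Nat.sum_antidiagonal_eq_sum_range_succ_mk]
      simp [Finset.sum_range_succ, ihx.1, ihx.2.1, ihx.2.2, ihy.1, ihy.2.1, ihy.2.2]

set_option synthInstance.maxHeartbeats 1000000 in
set_option maxHeartbeats 1000000 in
theorem gap_sequence_S33_E6 {k : Type*} [Field k]
    (O : Subalgebra k (PowerSeries k))
    (hO : O = Algebra.adjoin k {(X : PowerSeries k) ^ 3, (X : PowerSeries k) ^ 4})
    (a b : k) (I : Ideal O)
    (hI : ∀ f : O, f ∈ I ↔ ∃ g h : O,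
      (f : PowerSeries k) =
        (g : PowerSeries k) * (X ^ 3 + C a * X ^ 4 + C b * X ^ 8) +
        (h : PowerSeries k) * (X ^ 6 - C (a ^ 2) * X ^ 8)) :
    ({m : ℕ | ∃ a b : ℕ, m = 3 * a + 4 * b} \
      {n : ℕ | ∃ f ∈ I, f ≠ 0 ∧ (f : PowerSeries k).order = n}) = {0, 4, 8} ∧
    {n : ℕ | ∃ f ∈ I, f ≠ 0 ∧ (f : PowerSeries k).order = n} =
      {n : ℕ | ∃ γ ∈ {m : ℕ | ∃ a b : ℕ, m = 3 * a + 4 * b}, n = 3 + γ} := by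
  have h3m : (X : PowerSeries k) ^ 3 ∈ O := by
    rw [hO]; exact Algebra.subset_adjoin (Or.inl rfl)
  have h4m : (X : PowerSeries k) ^ 4 ∈ O := by
    rw [hO]; exact Algebra.subset_adjoin (Or.inr rfl)
  have h8m : (X : PowerSeries k) ^ 8 ∈ O := by
    have := mul_mem h4m h4m; rwa [← pow_add] at this
  have hF1mem : ((X : PowerSeries k) ^ 3 + C a * X ^ 4 + C b * X ^ 8) ∈ O := by
    refine add_mem (add_mem h3m ?_) ?_
    · rw [← smul_eq_C_mul]; exact Subalgebra.smul_mem O h4m a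
    · rw [← smul_eq_C_mul]; exact Subalgebra.smul_mem O h8m b
  have hF1ord : ((X : PowerSeries k) ^ 3 + C a * X ^ 4 + C b * X ^ 8).order = ((3 : ℕ) : ℕ∞) := by
    rw [order_eq_nat]
    constructor
    · simp [coeff_X_pow, coeff_C_mul]
    · intro i hi
      interval_cases i <;> simp [coeff_X_pow, coeff_C_mul]
  -- main characterization
  have main : ∀ n : ℕ, (∃ f ∈ I, f ≠ 0 ∧ (f : PowerSeries k).order = n) ↔
      (n ≠ 0 ∧ n ≠ 1 ∧ n ≠ 2 ∧ n ≠ 4 ∧ n ≠ 5 ∧ n ≠ 8) := by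
    intro n
    constructor
    · rintro ⟨f, hfI, hf0, hford⟩
      obtain ⟨g, h, heq⟩ := (hI f).1 hfI
      set G := (g : PowerSeries k) with hG
      set H := (h : PowerSeries k) with hH
      have hgm : G ∈ Algebra.adjoin k {(X : PowerSeries k) ^ 3, (X : PowerSeries k) ^ 4} := by
        rw [← hO]; exact g.2
      have hhm : H ∈ Algebra.adjoin k {(X : PowerSeries k) ^ 3, (X : PowerSeries k) ^ 4} := by
        rw [← hO]; exact h.2
      obtain ⟨hg1, hg2, hg5⟩ := coeff_vanish hgm
      obtain ⟨hh1, hh2, hh5⟩ := coeff_vanish hhm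
      obtain ⟨hcn, hlow⟩ := order_eq_nat.1 hford
      have expand : ∀ m : ℕ, coeff m (f : PowerSeries k) =
          (if 3 ≤ m then coeff (m - 3) G else 0)
          + a * (if 4 ≤ m then coeff (m - 4) G else 0)
          + b * (if 8 ≤ m then coeff (m - 8) G else 0)
          + (if 6 ≤ m then coeff (m - 6) H else 0)
          - a ^ 2 * (if 8 ≤ m then coeff (m - 8) H else 0) := by
        intro m
        have hrw : (f : PowerSeries k) = G * X ^ 3 + C a * (G * X ^ 4)
            + C b * (G * X ^ 8) + H * X ^ 6 - C (a ^ 2) * (H * X ^ 8) := by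
          rw [heq]; ring
        rw [hrw]
        simp only [map_add, map_sub, coeff_C_mul, coeff_mul_X_pow']
      refine ⟨?_, ?_, ?_, ?_, ?_, ?_⟩ <;> rintro rfl
      · apply hcn; rw [expand 0]; norm_num
      · apply hcn; rw [expand 1]; norm_num
      · apply hcn; rw [expand 2]; norm_num
      · have e3 := hlow 3 (by norm_num); rw [expand 3] at e3; norm_num at e3
        apply hcn; rw [expand 4]; norm_num [hg1]
        exact Or.inr e3
      · apply hcn; rw [expand 5]; norm_num [hg1, hg2]
      · have e3 := hlow 3 (by norm_num); rw [expand 3] at e3; norm_num at e3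
        have e6 := hlow 6 (by norm_num); rw [expand 6] at e6; norm_num at e6
        have e7 := hlow 7 (by norm_num); rw [expand 7] at e7; norm_num at e7
        apply hcn; rw [expand 8]; norm_num
        linear_combination a * e7 - a ^ 2 * e6 + b * e3 - a * hh1 + a ^ 3 * hg2 + hg5 + hh2
    · rintro ⟨h0, h1, h2, h4, h5, h8⟩
      obtain ⟨s, u, hsu⟩ := gam_mem (n - 3) (by omega) (by omega) (by omega)
      have hn3 : n = 3 + (3 * s + 4 * u) := by omega
      have hwmem : (X : PowerSeries k) ^ (3 * s + 4 * u) ∈ O := by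
        rw [pow_add, pow_mul, pow_mul]
        exact mul_mem (pow_mem h3m s) (pow_mem h4m u)
      set F1 : PowerSeries k := X ^ 3 + C a * X ^ 4 + C b * X ^ 8 with hF1
      refine ⟨⟨X ^ (3 * s + 4 * u) * F1, mul_mem hwmem hF1mem⟩, ?_, ?_, ?_⟩
      · rw [hI]
        exact ⟨⟨X ^ (3 * s + 4 * u), hwmem⟩, 0, by push_cast; ring⟩
      · intro hzero
        have : (X : PowerSeries k) ^ (3 * s + 4 * u) * F1 = 0 :=
          congrArg Subtype.val hzero
        rcases mul_eq_zero.1 this with hx | hx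
        · exact pow_ne_zero _ X_ne_zero hx
        · rw [hx, order_zero] at hF1ord; simp at hF1ord
      · show ((X : PowerSeries k) ^ (3 * s + 4 * u) * F1).order = (n : ℕ∞)
        rw [order_mul, order_X_pow, hF1ord, hn3]
        push_cast
        ring
  constructor
  · ext n
    simp only [Set.mem_diff, Set.mem_setOf_eq, Set.mem_insert_iff, Set.mem_singleton_iff]
    constructor
    · rintro ⟨⟨aa, bb, hab⟩, hnA⟩
      rw [main n] at hnA
      omega
    · rintro h
      refine ⟨gam_mem n (by omega) (by omega) (by omega), ?_⟩
      rw [main n]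
      omega
  · ext n
    simp only [Set.mem_setOf_eq]
    rw [main n]
    constructor
    · rintro ⟨h0, h1, h2, h4, h5, h8⟩
      exact ⟨n - 3, gam_mem (n - 3) (by omega) (by omega) (by omega), by omega⟩
    · rintro ⟨γ, ⟨aa, bb, hab⟩, rfl⟩
      omega
end

section
/- Let k be a field and O = k[[t^3,t^5]]. For all a, b ∈ k, the ideal I = (t^3 + a t^5 + b t^{10}, t^6 − a² t^{10}) of O has gap sequence G(I) = {0,5,10}, i.e. Γ(I) = {3+γ : γ ∈ Γ}. -/
open PowerSeries

lemma coeff_vanish_mem_adjoin {k : Type*} [Field k] (p : PowerSeries k)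
    (hp : p ∈ Algebra.adjoin k {(X : PowerSeries k) ^ 3, (X : PowerSeries k) ^ 5}) :
    coeff 1 p = 0 ∧ coeff 2 p = 0 ∧ coeff 4 p = 0 ∧ coeff 7 p = 0 := by
  let A : Subalgebra k (PowerSeries k) :=
    { carrier := {p | coeff 1 p = 0 ∧ coeff 2 p = 0 ∧ coeff 4 p = 0 ∧ coeff 7 p = 0}
      add_mem' := by
        rintro x y ⟨h1,h2,h4,h7⟩ ⟨g1,g2,g4,g7⟩
        simp_all [Set.mem_setOf_eq, map_add]
      mul_mem' := by
        rintro x y ⟨h1,h2,h4,h7⟩ ⟨g1,g2,g4,g7⟩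
        refine ⟨?_, ?_, ?_, ?_⟩ <;>
        · simp only [Set.mem_setOf_eq, coeff_mul,
            Finset.Nat.sum_antidiagonal_eq_sum_range_succ_mk, Finset.sum_range_succ,
            Finset.sum_range_zero]
          norm_num [h1,h2,h4,h7,g1,g2,g4,g7]
      algebraMap_mem' := by
        intro c
        refine ⟨?_, ?_, ?_, ?_⟩ <;> simp [PowerSeries.algebraMap_apply, coeff_C] }
  have hle : Algebra.adjoin k {(X : PowerSeries k) ^ 3, (X : PowerSeries k) ^ 5} ≤ A := by
    apply Algebra.adjoin_le
    rintro q (rfl | rfl) <;>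
      refine ⟨?_, ?_, ?_, ?_⟩ <;> simp [coeff_X_pow]
  exact hle hp

lemma coeff_comb {k : Type*} [Field k] (a b : k) (g h : PowerSeries k)
    (hg1 : coeff 1 g = 0) (hg2 : coeff 2 g = 0) (hg4 : coeff 4 g = 0) (hg7 : coeff 7 g = 0)
    (hh1 : coeff 1 h = 0) (hh2 : coeff 2 h = 0) (hh4 : coeff 4 h = 0) :
    let f := g * ((X : PowerSeries k) ^ 3 + C a * X ^ 5 + C b * X ^ 10) +
      h * ((X : PowerSeries k) ^ 6 - C (a ^ 2) * X ^ 10)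
    coeff 0 f = 0 ∧ coeff 1 f = 0 ∧ coeff 2 f = 0 ∧
    coeff 3 f = coeff 0 g ∧ coeff 4 f = 0 ∧
    coeff 5 f = a * coeff 0 g ∧
    coeff 6 f = coeff 3 g + coeff 0 h ∧ coeff 7 f = 0 ∧
    coeff 8 f = coeff 5 g + a * coeff 3 g ∧
    coeff 9 f = coeff 6 g + coeff 3 h ∧
    coeff 10 f = a * coeff 5 g + b * coeff 0 g - a ^ 2 * coeff 0 h := by
  intro f
  have hfexp : f = g * X ^ 3 + (g * X ^ 5) * C a + (g * X ^ 10) * C b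
      + h * X ^ 6 - (h * X ^ 10) * C (a ^ 2) := by
    show g * _ + h * _ = _
    ring
  refine ⟨?_,?_,?_,?_,?_,?_,?_,?_,?_,?_,?_⟩ <;>
  · rw [hfexp]
    simp only [map_add, map_sub, coeff_mul_C, coeff_mul_X_pow']
    norm_num [hg1,hg2,hg4,hg7,hh1,hh2,hh4]
    try ring

lemma gamma_iff (m : ℕ) : (∃ a b : ℕ, m = 3 * a + 5 * b) ↔
    (m ≠ 1 ∧ m ≠ 2 ∧ m ≠ 4 ∧ m ≠ 7) := by
  constructor
  · rintro ⟨a, b, rfl⟩; omega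
  · rintro ⟨h1, h2, h4, h7⟩
    rcases (show m % 3 = 0 ∨ m % 3 = 1 ∨ m % 3 = 2 by omega) with h3 | h3 | h3
    · exact ⟨m / 3, 0, by omega⟩
    · exact ⟨(m - 10) / 3, 2, by omega⟩
    · exact ⟨(m - 5) / 3, 1, by omega⟩

lemma shift_iff (n : ℕ) : (∃ γ, (∃ a b : ℕ, γ = 3 * a + 5 * b) ∧ n = 3 + γ) ↔
    (n ≠ 0 ∧ n ≠ 1 ∧ n ≠ 2 ∧ n ≠ 4 ∧ n ≠ 5 ∧ n ≠ 7 ∧ n ≠ 10) := by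
  constructor
  · rintro ⟨γ, ⟨a, b, rfl⟩, rfl⟩; omega
  · rintro ⟨h0, h1, h2, h4, h5, h7, h10⟩
    exact ⟨n - 3, (gamma_iff _).2 (by omega), by omega⟩

set_option synthInstance.maxHeartbeats 1000000 in
set_option maxHeartbeats 1000000 in
theorem gap_sequence_S33_E8 {k : Type*} [Field k]
    (O : Subalgebra k (PowerSeries k))
    (hO : O = Algebra.adjoin k {(X : PowerSeries k) ^ 3, (X : PowerSeries k) ^ 5})
    (a b : k) (I : Ideal O)
    (hI : ∀ f : O, f ∈ I ↔ ∃ g h : O,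
      (f : PowerSeries k) =
        (g : PowerSeries k) * (X ^ 3 + C a * X ^ 5 + C b * X ^ 10) +
        (h : PowerSeries k) * (X ^ 6 - C (a ^ 2) * X ^ 10)) :
    ({m : ℕ | ∃ a b : ℕ, m = 3 * a + 5 * b} \
      {n : ℕ | ∃ f ∈ I, f ≠ 0 ∧ (f : PowerSeries k).order = n}) = {0, 5, 10} ∧
    {n : ℕ | ∃ f ∈ I, f ≠ 0 ∧ (f : PowerSeries k).order = n} =
      {n : ℕ | ∃ γ ∈ {m : ℕ | ∃ a b : ℕ, m = 3 * a + 5 * b}, n = 3 + γ} := by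
  subst hO
  set F1 : PowerSeries k := X ^ 3 + C a * X ^ 5 + C b * X ^ 10 with hF1
  set F2 : PowerSeries k := X ^ 6 - C (a ^ 2) * X ^ 10 with hF2
  have hX3 : (X : PowerSeries k) ^ 3 ∈ Algebra.adjoin k {(X : PowerSeries k) ^ 3, (X : PowerSeries k) ^ 5} := Algebra.subset_adjoin (Set.mem_insert _ _)
  have hX5 : (X : PowerSeries k) ^ 5 ∈ Algebra.adjoin k {(X : PowerSeries k) ^ 3, (X : PowerSeries k) ^ 5} :=
    Algebra.subset_adjoin (Set.mem_insert_of_mem _ rfl)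
  have hXpow : ∀ u v : ℕ, (X : PowerSeries k) ^ (3 * u + 5 * v) ∈ Algebra.adjoin k {(X : PowerSeries k) ^ 3, (X : PowerSeries k) ^ 5} := by
    intro u v
    rw [pow_add, pow_mul, pow_mul]
    exact mul_mem (pow_mem hX3 u) (pow_mem hX5 v)
  have hF1mem : F1 ∈ Algebra.adjoin k {(X : PowerSeries k) ^ 3, (X : PowerSeries k) ^ 5} := by
    refine add_mem (add_mem hX3 (mul_mem ?_ hX5)) (mul_mem ?_ ?_)
    · exact Subalgebra.algebraMap_mem _ a
    · exact Subalgebra.algebraMap_mem _ b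
    · have := hXpow 0 2; simpa using this
  have hF1ord : F1.order = (3 : ℕ) := by
    rw [order_eq_nat]
    constructor
    · rw [hF1]
      simp [coeff_X_pow]
    · intro i hi
      interval_cases i <;> · rw [hF1]; simp [coeff_X_pow]
  have hF1ne : F1 ≠ 0 := by
    intro hz
    have : coeff 3 F1 = 0 := by rw [hz]; simp
    rw [hF1] at this
    simp [coeff_X_pow] at this
  -- main characterization of the value set
  have hV : {n : ℕ | ∃ f ∈ I, f ≠ 0 ∧ (f : PowerSeries k).order = n} =
      {n : ℕ | ∃ γ ∈ {m : ℕ | ∃ a b : ℕ, m = 3 * a + 5 * b}, n = 3 + γ} := by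
    ext n
    simp only [Set.mem_setOf_eq]
    constructor
    · rintro ⟨f, hfI, hfne, hford⟩
      obtain ⟨g, h, hexp⟩ := (hI f).1 hfI
      obtain ⟨hg1, hg2, hg4, hg7⟩ := coeff_vanish_mem_adjoin (g : PowerSeries k) g.2
      obtain ⟨hh1, hh2, hh4, hh7⟩ := coeff_vanish_mem_adjoin (h : PowerSeries k) h.2
      obtain ⟨c0, c1, c2, c3, c4, c5, c6, c7, c8, c9, c10⟩ :=
        coeff_comb a b (g : PowerSeries k) (h : PowerSeries k) hg1 hg2 hg4 hg7 hh1 hh2 hh4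
      rw [order_eq_nat] at hford
      obtain ⟨hn, hlow⟩ := hford
      rw [hexp] at hn
      have hlow' : ∀ i < n, coeff i ((g : PowerSeries k) * F1 + (h : PowerSeries k) * F2) = 0 := by
        intro i hi
        have := hlow i hi
        rwa [hexp] at this
      refine (shift_iff n).2 ⟨?_, ?_, ?_, ?_, ?_, ?_, ?_⟩ <;> rintro rfl
      · exact hn c0
      · exact hn c1
      · exact hn c2
      · exact hn c4
      · have hg0 : coeff 0 (g : PowerSeries k) = 0 := by
          have := hlow' 3 (by norm_num); rwa [c3] at this
        rw [c5, hg0, mul_zero] at hn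
        exact hn rfl
      · exact hn c7
      · have e3 : coeff 0 (g : PowerSeries k) = 0 := by
          have := hlow' 3 (by norm_num); rwa [c3] at this
        have e6 : coeff 3 (g : PowerSeries k) + coeff 0 (h : PowerSeries k) = 0 := by
          have := hlow' 6 (by norm_num); rwa [c6] at this
        have e8 : coeff 5 (g : PowerSeries k) + a * coeff 3 (g : PowerSeries k) = 0 := by
          have := hlow' 8 (by norm_num); rwa [c8] at this
        apply hn
        rw [c10]
        linear_combination a * e8 - a ^ 2 * e6 + b * e3
    · rintro ⟨γ, hγ, rfl⟩
      obtain ⟨u, v, rfl⟩ := hγ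
      set γ := 3 * u + 5 * v with hγdef
      refine ⟨⟨(X : PowerSeries k) ^ γ * F1, mul_mem (hXpow u v) hF1mem⟩, ?_, ?_, ?_⟩
      · rw [hI]
        exact ⟨⟨(X : PowerSeries k) ^ γ, hXpow u v⟩, 0, by push_cast; ring⟩
      · rw [ne_eq, ← ZeroMemClass.coe_eq_zero]
        exact mul_ne_zero (pow_ne_zero _ X_ne_zero) hF1ne
      · show ((X : PowerSeries k) ^ γ * F1).order = ((3 + γ : ℕ) : ℕ∞)
        rw [order_mul, order_X_pow, hF1ord]
        push_cast
        ring
  refine ⟨?_, hV⟩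
  rw [hV]
  ext n
  simp only [Set.mem_diff, Set.mem_setOf_eq, Set.mem_insert_iff, Set.mem_singleton_iff]
  rw [gamma_iff]
  constructor
  · rintro ⟨h1, h2⟩
    by_contra hc
    push_neg at hc
    exact h2 ((shift_iff n).2 (by omega))
  · intro hn
    refine ⟨by omega, ?_⟩
    intro hmem
    have := (shift_iff n).1 hmem
    omega
end
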